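/- Let p, ℓ be integers with 0 ≤ ℓ < p. Then every solution a : (−1,1) → ℝ of the Jacobi-type ODE with parameters (p, ℓ) extends to a polynomial function on all of ℝ; in particular, every solution is real-analytic at τ = 1 and at τ = −1. -/

import Mathlib

/-- `a` solves the Jacobi-type ODE
`(1−τ²)a'' + 2(p−1)τ a' + (ℓ(ℓ+1) − p(p−1)) a = 0` on `(−1,1)`. -/
def JacobiODESol (p ℓ : ℕ) (a : ℝ → ℝ) : Prop :=
  ∀ τ ∈ Set.Ioo (-1 : ℝ) 1,
    (1 - τ ^ 2) * deriv (deriv a) τ + 2 * ((p : ℝ) - 1) * τ * deriv a τ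
      + ((ℓ : ℝ) * ((ℓ : ℝ) + 1) - (p : ℝ) * ((p : ℝ) - 1)) * a τ = 0

open Polynomial

/-- recurrence ratio -/
noncomputable def jr (p ℓ k : ℕ) : ℝ :=
  (((k:ℝ) - ((p:ℝ) - (ℓ:ℝ) - 1)) * ((k:ℝ) - ((p:ℝ) + (ℓ:ℝ)))) / (((k:ℝ)+1) * ((k:ℝ)+2))

/-- coefficient sequence -/
noncomputable def jc (p ℓ : ℕ) (c0 c1 : ℝ) : ℕ → ℝ
  | 0 => c0
  | 1 => c1
  | (k+2) => jr p ℓ k * jc p ℓ c0 c1 k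

lemma jc_rec (p ℓ : ℕ) (c0 c1 : ℝ) (k : ℕ) :
    ((k:ℝ)+1)*((k:ℝ)+2) * jc p ℓ c0 c1 (k+2)
      = ((k:ℝ) - ((p:ℝ) - (ℓ:ℝ) - 1)) * ((k:ℝ) - ((p:ℝ) + (ℓ:ℝ))) * jc p ℓ c0 c1 k := by
  show ((k:ℝ)+1)*((k:ℝ)+2) * (jr p ℓ k * jc p ℓ c0 c1 k) = _
  rw [jr]
  have h1 : ((k:ℝ)+1) ≠ 0 := by positivity
  have h2 : ((k:ℝ)+2) ≠ 0 := by positivity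
  field_simp

lemma jc_chain (p ℓ : ℕ) (c0 c1 : ℝ) (m : ℕ) (hm : jr p ℓ m = 0) :
    ∀ j, jc p ℓ c0 c1 (m + 2 + 2*j) = 0 := by
  intro j
  induction j with
  | zero => show jc p ℓ c0 c1 (m+2) = 0; show jr p ℓ m * _ = 0; rw [hm]; ring
  | succ n ih =>
      have : m + 2 + 2*(n+1) = (m + 2 + 2*n) + 2 := by ring
      rw [this]
      show jr p ℓ _ * jc p ℓ c0 c1 (m + 2 + 2*n) = 0
      rw [ih]; ring

lemma jc_vanish (p ℓ : ℕ) (h : ℓ < p) (c0 c1 : ℝ) :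
    ∀ k, p + ℓ + 1 ≤ k → jc p ℓ c0 c1 k = 0 := by
  intro k hk
  have hr1 : jr p ℓ (p - ℓ - 1) = 0 := by
    have : ((p - ℓ - 1 : ℕ) : ℝ) = (p:ℝ) - (ℓ:ℝ) - 1 := by
      have : (p - ℓ - 1 : ℕ) + ℓ + 1 = p := by omega
      have := congrArg (Nat.cast : ℕ → ℝ) this
      push_cast at this
      linarith
    rw [jr, this]
    simp
  have hr2 : jr p ℓ (p + ℓ) = 0 := by
    rw [jr]
    push_cast
    simp [sub_self]
  rcases Nat.even_or_odd (k + (p + ℓ)) with he | ho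
  · -- k same parity as p+ℓ, k ≥ p+ℓ+2
    obtain ⟨t, ht⟩ := he
    obtain ⟨j, hj⟩ : ∃ j, k = (p + ℓ) + 2 + 2*j := ⟨t - (p+ℓ) - 1, by omega⟩
    rw [hj]
    exact jc_chain p ℓ c0 c1 _ hr2 j
  · -- k same parity as p-ℓ-1
    obtain ⟨t, ht⟩ := ho
    obtain ⟨j, hj⟩ : ∃ j, k = (p - ℓ - 1) + 2 + 2*j := ⟨t - p, by omega⟩
    rw [hj]
    exact jc_chain p ℓ c0 c1 _ hr1 j

/-- the candidate polynomial solution -/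
noncomputable def jpoly (p ℓ : ℕ) (c0 c1 : ℝ) : ℝ[X] :=
  ∑ k ∈ Finset.range (p + ℓ + 1), Polynomial.monomial k (jc p ℓ c0 c1 k)

lemma jpoly_coeff (p ℓ : ℕ) (h : ℓ < p) (c0 c1 : ℝ) (n : ℕ) :
    (jpoly p ℓ c0 c1).coeff n = jc p ℓ c0 c1 n := by
  rw [jpoly, Polynomial.finset_sum_coeff]
  simp only [Polynomial.coeff_monomial]
  rw [Finset.sum_ite_eq' (Finset.range (p+ℓ+1)) n]
  by_cases hn : n ∈ Finset.range (p+ℓ+1)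
  · rw [if_pos hn]
  · rw [if_neg hn]
    exact (jc_vanish p ℓ h c0 c1 n (by simpa using hn)).symm

lemma jpoly_ode (p ℓ : ℕ) (h : ℓ < p) (c0 c1 : ℝ) :
    (1 - X^2) * derivative (derivative (jpoly p ℓ c0 c1))
      + C (2*((p:ℝ)-1)) * (X * derivative (jpoly p ℓ c0 c1))
      + C ((ℓ:ℝ)*((ℓ:ℝ)+1) - (p:ℝ)*((p:ℝ)-1)) * (jpoly p ℓ c0 c1) = 0 := by
  have hc : ∀ n, (jpoly p ℓ c0 c1).coeff n = jc p ℓ c0 c1 n := jpoly_coeff p ℓ h c0 c1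
  have e1 : ∀ (f : ℝ[X]) (n : ℕ),
      ((1 - X^2) * f).coeff n = f.coeff n - (if 2 ≤ n then f.coeff (n-2) else 0) := by
    intro f n
    rw [sub_mul, one_mul, coeff_sub, coeff_X_pow_mul']
  have e2 : ∀ (f : ℝ[X]) (n : ℕ),
      (X * f).coeff n = (if 1 ≤ n then f.coeff (n-1) else 0) := by
    intro f n
    rw [← pow_one (X : ℝ[X]), coeff_X_pow_mul']
  ext n
  simp only [coeff_add, coeff_zero, coeff_C_mul, e1, e2, coeff_derivative, hc]
  match n with
  | 0 =>
      simp only [if_neg (by omega : ¬ (2:ℕ) ≤ 0), if_neg (by omega : ¬ (1:ℕ) ≤ 0)]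
      push_cast
      linear_combination jc_rec p ℓ c0 c1 0
  | 1 =>
      simp only [if_neg (by omega : ¬ (2:ℕ) ≤ 1), if_pos (by omega : (1:ℕ) ≤ 1)]
      norm_num
      push_cast
      linear_combination jc_rec p ℓ c0 c1 1
  | (n+2) =>
      simp only [if_pos (by omega : 2 ≤ n+2), if_pos (by omega : 1 ≤ n+2)]
      have h1 : n + 2 - 2 = n := by omega
      have h2 : n + 2 - 1 = n + 1 := by omega
      simp only [h1, h2]
      have hrec := jc_rec p ℓ c0 c1 (n+2)
      push_cast at hrec
      simp only [Nat.add_assoc] at hrec ⊢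
      norm_num at hrec ⊢
      push_cast
      linear_combination hrec

lemma wronskian_eq (p : ℕ) (hp : 1 ≤ p) (lam : ℝ) (f f' f'' g g' g'' : ℝ → ℝ)
    (hf : ∀ τ ∈ Set.Ioo (-1:ℝ) 1, HasDerivAt f (f' τ) τ)
    (hf' : ∀ τ ∈ Set.Ioo (-1:ℝ) 1, HasDerivAt f' (f'' τ) τ)
    (hg : ∀ τ ∈ Set.Ioo (-1:ℝ) 1, HasDerivAt g (g' τ) τ)
    (hg' : ∀ τ ∈ Set.Ioo (-1:ℝ) 1, HasDerivAt g' (g'' τ) τ)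
    (hfode : ∀ τ ∈ Set.Ioo (-1:ℝ) 1,
      (1 - τ^2) * f'' τ + 2*((p:ℝ)-1)*τ*(f' τ) + lam * f τ = 0)
    (hgode : ∀ τ ∈ Set.Ioo (-1:ℝ) 1,
      (1 - τ^2) * g'' τ + 2*((p:ℝ)-1)*τ*(g' τ) + lam * g τ = 0) :
    ∀ τ ∈ Set.Ioo (-1:ℝ) 1,
      f τ * g' τ - f' τ * g τ = (f 0 * g' 0 - f' 0 * g 0) * (1-τ^2)^(p-1) := by
  set W : ℝ → ℝ := fun τ => f τ * g' τ - f' τ * g τ with hW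
  set V : ℝ → ℝ := fun τ => (1 - τ^2)^(p-1) with hV
  have hpos : ∀ τ ∈ Set.Ioo (-1:ℝ) 1, (0:ℝ) < 1 - τ^2 := by
    intro τ hτ
    obtain ⟨h1, h2⟩ := hτ
    nlinarith
  have hVne : ∀ τ ∈ Set.Ioo (-1:ℝ) 1, V τ ≠ 0 := by
    intro τ hτ
    exact pow_ne_zero _ (ne_of_gt (hpos τ hτ))
  have hWd : ∀ τ ∈ Set.Ioo (-1:ℝ) 1,
      HasDerivAt W (f τ * g'' τ - f'' τ * g τ) τ := by
    intro τ hτ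
    have H := ((hf τ hτ).mul (hg' τ hτ)).sub ((hf' τ hτ).mul (hg τ hτ))
    have e : f' τ * g' τ + f τ * g'' τ - (f'' τ * g τ + f' τ * g' τ)
        = f τ * g'' τ - f'' τ * g τ := by ring
    rwa [e] at H
  have hVd : ∀ τ : ℝ,
      HasDerivAt V (((p:ℝ)-1) * (1 - τ^2)^(p-1-1) * (-(2*τ))) τ := by
    intro τ
    have h0 : HasDerivAt (fun x : ℝ => 1 - x^2) (-(2*τ)) τ := by
      have := (hasDerivAt_pow 2 τ).const_sub 1
      simpa using this
    have := (h0.pow (p-1) : HasDerivAt (fun x : ℝ => (1 - x^2)^(p-1)) _ τ)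
    have hcast : ((p - 1 : ℕ) : ℝ) = (p:ℝ) - 1 := by
      rw [Nat.cast_sub hp]; norm_num
    rw [hV, ← hcast]; exact this
  -- numerator identity
  have hkey : ∀ τ ∈ Set.Ioo (-1:ℝ) 1,
      (f τ * g'' τ - f'' τ * g τ) * V τ
        - W τ * (((p:ℝ)-1) * (1 - τ^2)^(p-1-1) * (-(2*τ))) = 0 := by
    intro τ hτ
    have hWV : (1 - τ^2) * (f τ * g'' τ - f'' τ * g τ)
        = -(2*((p:ℝ)-1)*τ) * W τ := by
      have h1 := hfode τ hτ
      have h2 := hgode τ hτ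
      rw [hW]
      linear_combination f τ * h2 - g τ * h1
    rcases Nat.lt_or_ge p 2 with hp2 | hp2
    · -- p = 1
      have hp1 : p = 1 := by omega
      subst hp1
      have hne : (1:ℝ) - τ^2 ≠ 0 := ne_of_gt (hpos τ hτ)
      have hX : f τ * g'' τ - f'' τ * g τ = 0 := by
        have h2 : (1 - τ^2) * (f τ * g'' τ - f'' τ * g τ) = 0 := by
          rw [hWV]; norm_num
        exact (mul_eq_zero.mp h2).resolve_left hne
      simp only [hV]
      norm_num [hX]
    · -- p ≥ 2, p - 1 = (p-2) + 1
      have e1 : p - 1 = (p - 2) + 1 := by omega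
      have e2 : p - 1 - 1 = p - 2 := by omega
      rw [hV]
      simp only [e1, e2]
      have : (1 - τ^2)^(p-2+1) = (1-τ^2)^(p-2) * (1-τ^2) := by ring
      rw [this]
      calc (f τ * g'' τ - f'' τ * g τ) * ((1 - τ^2)^(p-2) * (1 - τ^2))
            - W τ * (((p:ℝ)-1) * (1 - τ^2)^(p-2) * (-(2*τ)))
          = (1-τ^2)^(p-2) * ((1 - τ^2) * (f τ * g'' τ - f'' τ * g τ)
              + 2*((p:ℝ)-1)*τ * W τ) := by ring
        _ = 0 := by rw [hWV]; ring
  -- F has zero derivative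
  set F : ℝ → ℝ := fun τ => W τ / V τ with hF
  have hFd : ∀ τ ∈ Set.Ioo (-1:ℝ) 1, HasDerivAt F 0 τ := by
    intro τ hτ
    have H := (hWd τ hτ).div (hVd τ) (hVne τ hτ)
    have : ((f τ * g'' τ - f'' τ * g τ) * V τ
        - W τ * (((p:ℝ)-1) * (1 - τ^2)^(p-1-1) * (-(2*τ)))) / (V τ)^2 = 0 := by
      rw [hkey τ hτ, zero_div]
    rwa [this] at H
  have h0mem : (0:ℝ) ∈ Set.Ioo (-1:ℝ) 1 := by norm_num
  have hconst : ∀ τ ∈ Set.Ioo (-1:ℝ) 1, F τ = F 0 := by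
    intro τ hτ
    have := (convex_Ioo (-1:ℝ) 1).is_const_of_fderivWithin_eq_zero
      (f := F) (fun x hx => ((hFd x hx).differentiableAt).differentiableWithinAt)
      (fun x hx => by
        rw [fderivWithin_of_isOpen isOpen_Ioo hx]
        have := (hFd x hx).hasFDerivAt.fderiv
        rw [this]
        ext y
        simp) hτ h0mem
    exact this
  intro τ hτ
  have hWF : W τ = F τ * V τ := (div_mul_cancel₀ (W τ) (hVne τ hτ)).symm
  have hV0 : V 0 = 1 := by simp [hV]
  have hF0 : F 0 = W 0 := by rw [hF]; simp [hV0]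
  have hW0 : W 0 = f 0 * g' 0 - f' 0 * g 0 := rfl
  rw [show f τ * g' τ - f' τ * g τ = W τ from rfl, hWF, hconst τ hτ, hF0, hW0, hV]

lemma jpoly_eval_ode (p ℓ : ℕ) (h : ℓ < p) (c0 c1 : ℝ) (τ : ℝ) :
    (1 - τ^2) * ((jpoly p ℓ c0 c1).derivative.derivative.eval τ)
      + 2*((p:ℝ)-1)*τ*((jpoly p ℓ c0 c1).derivative.eval τ)
      + ((ℓ:ℝ)*((ℓ:ℝ)+1) - (p:ℝ)*((p:ℝ)-1)) * ((jpoly p ℓ c0 c1).eval τ) = 0 := by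
  have := congrArg (Polynomial.eval τ) (jpoly_ode p ℓ h c0 c1)
  simp only [eval_add, eval_mul, eval_sub, eval_one, eval_pow, eval_X, eval_C,
    eval_zero] at this
  linear_combination this

lemma jpoly_eval_zero (p ℓ : ℕ) (h : ℓ < p) (c0 c1 : ℝ) :
    (jpoly p ℓ c0 c1).eval 0 = c0 := by
  rw [← Polynomial.coeff_zero_eq_eval_zero, jpoly_coeff p ℓ h]
  rfl

lemma jpoly_deriv_eval_zero (p ℓ : ℕ) (h : ℓ < p) (c0 c1 : ℝ) :
    (jpoly p ℓ c0 c1).derivative.eval 0 = c1 := by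
  rw [← Polynomial.coeff_zero_eq_eval_zero, coeff_derivative, jpoly_coeff p ℓ h]
  show c1 * ((0:ℕ) + 1 : ℝ) = c1
  norm_num

theorem stmt8' (p ℓ : ℕ) (h : ℓ < p) (a : ℝ → ℝ)
    (ha : ∀ τ ∈ Set.Ioo (-1 : ℝ) 1, DifferentiableAt ℝ a τ)
    (ha' : ∀ τ ∈ Set.Ioo (-1 : ℝ) 1, DifferentiableAt ℝ (deriv a) τ)
    (hODE : ∀ τ ∈ Set.Ioo (-1 : ℝ) 1,
      (1 - τ ^ 2) * deriv (deriv a) τ + 2 * ((p : ℝ) - 1) * τ * deriv a τ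
        + ((ℓ : ℝ) * ((ℓ : ℝ) + 1) - (p : ℝ) * ((p : ℝ) - 1)) * a τ = 0) :
    ∃ q : Polynomial ℝ, (∀ τ ∈ Set.Ioo (-1 : ℝ) 1, a τ = q.eval τ) ∧
      AnalyticAt ℝ (fun x : ℝ => q.eval x) 1 ∧
      AnalyticAt ℝ (fun x : ℝ => q.eval x) (-1) := by
  have hp : 1 ≤ p := by omega
  set lam : ℝ := (ℓ:ℝ)*((ℓ:ℝ)+1) - (p:ℝ)*((p:ℝ)-1) with hlam
  set q : ℝ[X] := jpoly p ℓ (a 0) (deriv a 0) with hq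
  set q1 : ℝ[X] := jpoly p ℓ 1 0 with hq1
  set q2 : ℝ[X] := jpoly p ℓ 0 1 with hq2
  have hanal : ∀ c : ℝ, AnalyticAt ℝ (fun x : ℝ => q.eval x) c := by
    intro c
    have h1 : AnalyticAt ℝ (fun x : ℝ => x) c := analyticAt_id
    have h2 := h1.aeval_polynomial q
    simpa [Polynomial.coe_aeval_eq_eval] using h2
  refine ⟨q, ?_, hanal 1, hanal (-1)⟩
  set u : ℝ → ℝ := fun τ => a τ - q.eval τ with hu
  set u' : ℝ → ℝ := fun τ => deriv a τ - q.derivative.eval τ with hu'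
  set u'' : ℝ → ℝ := fun τ => deriv (deriv a) τ - q.derivative.derivative.eval τ with hu''
  have hud : ∀ τ ∈ Set.Ioo (-1:ℝ) 1, HasDerivAt u (u' τ) τ :=
    fun τ hτ => ((ha τ hτ).hasDerivAt).sub (q.hasDerivAt τ)
  have hud' : ∀ τ ∈ Set.Ioo (-1:ℝ) 1, HasDerivAt u' (u'' τ) τ :=
    fun τ hτ => ((ha' τ hτ).hasDerivAt).sub (q.derivative.hasDerivAt τ)
  have huode : ∀ τ ∈ Set.Ioo (-1:ℝ) 1,
      (1-τ^2) * u'' τ + 2*((p:ℝ)-1)*τ*(u' τ) + lam * u τ = 0 := by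
    intro τ hτ
    have h1 := hODE τ hτ
    have h2 := jpoly_eval_ode p ℓ h (a 0) (deriv a 0) τ
    simp only [hu, hu', hu'', hlam]
    linear_combination h1 - h2
  have hq1ode : ∀ τ ∈ Set.Ioo (-1:ℝ) 1,
      (1-τ^2) * (q1.derivative.derivative.eval τ)
        + 2*((p:ℝ)-1)*τ*(q1.derivative.eval τ) + lam * q1.eval τ = 0 :=
    fun τ _ => jpoly_eval_ode p ℓ h 1 0 τ
  have hq2ode : ∀ τ ∈ Set.Ioo (-1:ℝ) 1,
      (1-τ^2) * (q2.derivative.derivative.eval τ)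
        + 2*((p:ℝ)-1)*τ*(q2.derivative.eval τ) + lam * q2.eval τ = 0 :=
    fun τ _ => jpoly_eval_ode p ℓ h 0 1 τ
  have hq1d : ∀ τ ∈ Set.Ioo (-1:ℝ) 1,
      HasDerivAt (fun x => q1.eval x) (q1.derivative.eval τ) τ := fun τ _ => q1.hasDerivAt τ
  have hq1d' : ∀ τ ∈ Set.Ioo (-1:ℝ) 1,
      HasDerivAt (fun x => q1.derivative.eval x) (q1.derivative.derivative.eval τ) τ :=
    fun τ _ => q1.derivative.hasDerivAt τ
  have hq2d : ∀ τ ∈ Set.Ioo (-1:ℝ) 1,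
      HasDerivAt (fun x => q2.eval x) (q2.derivative.eval τ) τ := fun τ _ => q2.hasDerivAt τ
  have hq2d' : ∀ τ ∈ Set.Ioo (-1:ℝ) 1,
      HasDerivAt (fun x => q2.derivative.eval x) (q2.derivative.derivative.eval τ) τ :=
    fun τ _ => q2.derivative.hasDerivAt τ
  have hu0 : u 0 = 0 := by
    simp only [hu]
    rw [hq, jpoly_eval_zero p ℓ h, sub_self]
  have hu'0 : u' 0 = 0 := by
    simp only [hu']
    rw [hq, jpoly_deriv_eval_zero p ℓ h, sub_self]
  have hW1 := wronskian_eq p hp lam u u' u''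
    (fun x => q1.eval x) (fun x => q1.derivative.eval x) (fun x => q1.derivative.derivative.eval x)
    hud hud' hq1d hq1d' huode hq1ode
  have hW2 := wronskian_eq p hp lam u u' u''
    (fun x => q2.eval x) (fun x => q2.derivative.eval x) (fun x => q2.derivative.derivative.eval x)
    hud hud' hq2d hq2d' huode hq2ode
  have hZ := wronskian_eq p hp lam
    (fun x => q1.eval x) (fun x => q1.derivative.eval x) (fun x => q1.derivative.derivative.eval x)
    (fun x => q2.eval x) (fun x => q2.derivative.eval x) (fun x => q2.derivative.derivative.eval x)
    hq1d hq1d' hq2d hq2d' hq1ode hq2ode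
  intro τ hτ
  have hpos : (0:ℝ) < 1 - τ^2 := by
    obtain ⟨hl, hr⟩ := hτ
    nlinarith
  have hVne : (1 - τ^2)^(p-1) ≠ 0 := pow_ne_zero _ (ne_of_gt hpos)
  have e1 : u τ * q1.derivative.eval τ - u' τ * q1.eval τ = 0 := by
    have := hW1 τ hτ
    rw [hu0, hu'0] at this
    simpa using this
  have e2 : u τ * q2.derivative.eval τ - u' τ * q2.eval τ = 0 := by
    have := hW2 τ hτ
    rw [hu0, hu'0] at this
    simpa using this
  have eZ : q1.eval τ * q2.derivative.eval τ - q1.derivative.eval τ * q2.eval τ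
      = (1 - τ^2)^(p-1) := by
    have := hZ τ hτ
    rw [hq1, hq2, jpoly_eval_zero p ℓ h, jpoly_deriv_eval_zero p ℓ h,
      jpoly_eval_zero p ℓ h, jpoly_deriv_eval_zero p ℓ h] at this
    simpa using this
  have hkey : u τ * (1 - τ^2)^(p-1) = 0 := by
    linear_combination (q1.eval τ) * e2 - (q2.eval τ) * e1 - (u τ) * eZ
  have hu0' : u τ = 0 := by
    rcases mul_eq_zero.mp hkey with h' | h'
    · exact h'
    · exact absurd h' hVne
  have : a τ - q.eval τ = 0 := hu0'
  linarith


/-- For `0 ≤ ℓ < p`, every solution on `(−1,1)` of the Jacobi-type ODE with parameters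
`(p, ℓ)` extends to a polynomial function on all of `ℝ`; in particular the extension is
real-analytic at `τ = 1` and at `τ = −1`. -/
theorem stmt8 (p ℓ : ℕ) (h : ℓ < p) (a : ℝ → ℝ)
    (ha : ∀ τ ∈ Set.Ioo (-1 : ℝ) 1, DifferentiableAt ℝ a τ)
    (ha' : ∀ τ ∈ Set.Ioo (-1 : ℝ) 1, DifferentiableAt ℝ (deriv a) τ)
    (hODE : JacobiODESol p ℓ a) :
    ∃ q : Polynomial ℝ, (∀ τ ∈ Set.Ioo (-1 : ℝ) 1, a τ = q.eval τ) ∧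
      AnalyticAt ℝ (fun x : ℝ => q.eval x) 1 ∧
      AnalyticAt ℝ (fun x : ℝ => q.eval x) (-1) := by
  exact stmt8' p ℓ h a ha ha' hODE
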